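/- Let q = 2^m with m ≥ 4 even, and let C be a binary linear code of length 2^m and dimension 2m+1 with weight distribution: weight 0 once, 2^(m−1)−2^(m/2) with multiplicity (2^m−1)·2^(m−2)/3, 2^(m−1)−2^((m−2)/2) with multiplicity (2^m−1)·2^(m+1)/3, 2^(m−1) with multiplicity 2(2^m−1)(2^(m−2)+1), 2^(m−1)+2^((m−2)/2) with multiplicity (2^m−1)·2^(m+1)/3, 2^(m−1)+2^(m/2) with multiplicity (2^m−1)·2^(m−2)/3, and 2^m once. Then the number of weight-6 codewords of the dual code is A₆(C⊥) = (1/45)·2^(m−4)·(2^m−4)²·(2^m−1). -/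

import Mathlib

open Finset

/-- Hamming weight of a word. -/
noncomputable def wt {K : Type*} [Field K] {ι : Type*} [Fintype ι] (c : ι → K) : ℕ :=
  Nat.card {i : ι // c i ≠ 0}

/-- The linear functional `v ↦ ∑ i, v i * c i`. -/
noncomputable def dotL {K : Type*} [Field K] {ι : Type*} [Fintype ι] (c : ι → K) :
    (ι → K) →ₗ[K] K where
  toFun v := ∑ i, v i * c i
  map_add' u v := by simp [add_mul, Finset.sum_add_distrib]
  map_smul' r v := by simp [Finset.mul_sum, mul_assoc]

/-- The dual code of a linear code. -/
noncomputable def dualCode {K : Type*} [Field K] {ι : Type*} [Fintype ι]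
    (C : Submodule K (ι → K)) : Submodule K (ι → K) :=
  ⨅ c ∈ C, LinearMap.ker (dotL c)

/-- The punctured code of `C` on `T`. -/
noncomputable def punctureCode {K : Type*} [Field K] {ι : Type*}
    (C : Submodule K (ι → K)) (T : Finset ι) :
    Submodule K ({i : ι // i ∉ T} → K) :=
  C.map (LinearMap.funLeft K K Subtype.val)

/-- The shortened code of `C` on `T`. -/
noncomputable def shortenCode {K : Type*} [Field K] {ι : Type*}
    (C : Submodule K (ι → K)) (T : Finset ι) :
    Submodule K ({i : ι // i ∉ T} → K) :=
  (C ⊓ ⨅ i ∈ T, LinearMap.ker (LinearMap.proj i)).map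
    (LinearMap.funLeft K K Subtype.val)

/-- The number of codewords of weight `w` in a code. -/
noncomputable def numwt {K : Type*} [Field K] {ι : Type*} [Fintype ι]
    (C : Submodule K (ι → K)) (w : ℕ) : ℕ :=
  Nat.card {c : C // wt (c : ι → K) = w}

open Polynomial



noncomputable def eps (x : ZMod 2) : ℚ := if x = 0 then 1 else -1

lemma eps_zero : eps 0 = 1 := rfl

lemma eps_add (a b : ZMod 2) : eps (a + b) = eps a * eps b := by
  fin_cases a <;> fin_cases b <;> norm_num [eps] <;> decide

lemma eps_sum {ι : Type*} (s : Finset ι) (f : ι → ZMod 2) :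
    eps (∑ i ∈ s, f i) = ∏ i ∈ s, eps (f i) := by
  classical
  induction s using Finset.cons_induction with
  | empty => simp [eps]
  | cons a s ha ih => rw [Finset.sum_cons, Finset.prod_cons, eps_add, ih]

lemma wt_eq_card {K : Type*} [Field K] {ι : Type*} [Fintype ι] (c : ι → K) [DecidableEq K] :
    wt c = (univ.filter fun i => c i ≠ 0).card := by
  rw [wt, Nat.card_eq_fintype_card, Fintype.card_subtype]

lemma wt_le {K : Type*} [Field K] {ι : Type*} [Fintype ι] (c : ι → K) :
    wt c ≤ Fintype.card ι := by
  classical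
  rw [wt_eq_card]
  exact (Finset.card_filter_le _ _).trans (le_of_eq (Finset.card_univ))

lemma wt_eq_zero_iff {K : Type*} [Field K] {ι : Type*} [Fintype ι] (c : ι → K) :
    wt c = 0 ↔ c = 0 := by
  classical
  rw [wt_eq_card, Finset.card_eq_zero, Finset.filter_eq_empty_iff]
  constructor
  · intro h; funext i; simpa using h (Finset.mem_univ i)
  · intro h i _; simp [h]

lemma wt_eq_sum {K : Type*} [Field K] {ι : Type*} [Fintype ι] (c : ι → K) [DecidableEq K] :
    wt c = ∑ i, (if c i = 0 then 0 else 1) := by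
  rw [wt_eq_card, Finset.card_filter]
  exact Finset.sum_congr rfl fun i _ => by by_cases h : c i = 0 <;> simp [h]

open Polynomial

lemma zmod2_cases (a : ZMod 2) : a = 0 ∨ a = 1 := by fin_cases a; exacts [Or.inl rfl, Or.inr rfl]

lemma sum_zmod2 {M : Type*} [AddCommMonoid M] (g : ZMod 2 → M) :
    ∑ a : ZMod 2, g a = g 0 + g 1 := by
  have h : (univ : Finset (ZMod 2)) = {0, 1} := by decide
  rw [h, Finset.sum_insert (by decide), Finset.sum_singleton]

lemma step1 {n : ℕ} (c : Fin n → ZMod 2) (v : Fin n → ZMod 2) :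
    (Polynomial.C (eps (∑ i, v i * c i)) * X ^ wt v : ℚ[X])
      = ∏ i, (Polynomial.C (eps (v i * c i)) * X ^ (if v i = 0 then 0 else 1)) := by
  rw [eps_sum, map_prod, wt_eq_sum, ← Finset.prod_pow_eq_pow_sum, ← Finset.prod_mul_distrib]

lemma sum_eps_pol {n : ℕ} (c : Fin n → ZMod 2) :
    ∑ v : Fin n → ZMod 2, (Polynomial.C (eps (∑ i, v i * c i)) * X ^ wt v : ℚ[X])
      = (1 + X) ^ (n - wt c) * (1 - X) ^ wt c := by
  calc ∑ v : Fin n → ZMod 2, (Polynomial.C (eps (∑ i, v i * c i)) * X ^ wt v : ℚ[X])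
      = ∏ i, ∑ a : ZMod 2, (Polynomial.C (eps (a * c i)) * X ^ (if a = 0 then 0 else 1)) := by
        rw [Finset.prod_univ_sum]
        exact Finset.sum_congr Fintype.piFinset_univ fun v _ => step1 c v
    _ = ∏ i, (1 + Polynomial.C (eps (c i)) * X) := by
        refine Finset.prod_congr rfl fun i _ => ?_
        rw [sum_zmod2]
        simp [eps_zero, one_ne_zero]
    _ = (1 + X) ^ (n - wt c) * (1 - X) ^ wt c := by
        rw [← Finset.prod_filter_mul_prod_filter_not univ (fun i => c i = 0)]
        have h1 : ∀ i ∈ univ.filter (fun i => c i = 0),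
            (1 + Polynomial.C (eps (c i)) * X : ℚ[X]) = 1 + X := by
          intro i hi
          rw [Finset.mem_filter] at hi
          rw [hi.2, eps_zero, map_one, one_mul]
        have h2 : ∀ i ∈ univ.filter (fun i => ¬ c i = 0),
            (1 + Polynomial.C (eps (c i)) * X : ℚ[X]) = 1 - X := by
          intro i hi
          rw [Finset.mem_filter] at hi
          rcases zmod2_cases (c i) with h | h
          · exact absurd h hi.2
          · rw [h]
            norm_num [eps, sub_eq_add_neg]
        rw [Finset.prod_congr rfl h1, Finset.prod_congr rfl h2,
          Finset.prod_const, Finset.prod_const]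
        congr 1
        · congr 1
          have := Finset.card_filter_add_card_filter_not
            (s := (univ : Finset (Fin n))) (p := fun i => c i = 0)
          rw [wt_eq_card]
          simp only [Finset.card_univ, Fintype.card_fin, ne_eq] at this ⊢
          omega
        · rw [wt_eq_card]

lemma coeff_one_sub_X_pow (B j : ℕ) : ((1 - X : ℚ[X]) ^ B).coeff j
    = (-1) ^ j * (B.choose j : ℚ) := by
  have h : (1 - X : ℚ[X]) ^ B = ∑ k ∈ range (B + 1),
      Polynomial.C ((-1) ^ k * (B.choose k : ℚ)) * X ^ k := by
    rw [sub_eq_add_neg, add_comm, add_pow]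
    refine Finset.sum_congr rfl fun k hk => ?_
    have : (-X : ℚ[X]) ^ k = (-1) ^ k * X ^ k := by
      rw [neg_pow]
    rw [this]
    simp only [one_pow, mul_one, map_mul, map_pow, map_neg, map_one, map_natCast]
    ring
  rw [h, finset_sum_coeff]
  simp only [coeff_C_mul, coeff_X_pow, mul_ite, mul_one, mul_zero]
  rw [Finset.sum_ite_eq (range (B + 1)) j]
  by_cases hj : j ≤ B
  · simp [Finset.mem_range, Nat.lt_succ_of_le hj]
  · push_neg at hj
    simp [Finset.mem_range, Nat.choose_eq_zero_of_lt hj, Nat.lt_succ_iff, hj.not_ge]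

lemma coeff6 (A B : ℕ) : (((1 + X) ^ A * (1 - X) ^ B : ℚ[X])).coeff 6
    = ∑ j ∈ range 7, (A.choose j : ℚ) * ((-1) ^ (6 - j) * (B.choose (6 - j) : ℚ)) := by
  rw [coeff_mul, Finset.Nat.sum_antidiagonal_eq_sum_range_succ_mk]
  exact Finset.sum_congr rfl fun k _ => by
    rw [coeff_one_add_X_pow, coeff_one_sub_X_pow]




lemma eps_one : eps 1 = -1 := by norm_num [eps]

lemma mem_dualCode {K : Type*} [Field K] {ι : Type*} [Fintype ι]
    (D : Submodule K (ι → K)) (v : ι → K) :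
    v ∈ dualCode D ↔ ∀ c ∈ D, ∑ i, v i * c i = 0 := by
  simp [dualCode, Submodule.mem_iInf, LinearMap.mem_ker, dotL, LinearMap.coe_mk, AddHom.coe_mk]

lemma orth_mem {n : ℕ} (D : Submodule (ZMod 2) (Fin n → ZMod 2)) [Fintype D]
    (v : Fin n → ZMod 2) (hv : v ∈ dualCode D) :
    ∑ c : D, eps (∑ i, v i * (c : Fin n → ZMod 2) i) = (Fintype.card D : ℚ) := by
  rw [mem_dualCode] at hv
  have : ∀ c : D, eps (∑ i, v i * (c : Fin n → ZMod 2) i) = 1 := fun c => by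
    rw [hv c c.2, eps_zero]
  rw [Finset.sum_congr rfl fun c _ => this c, Finset.sum_const, Finset.card_univ]
  simp

lemma orth_not_mem {n : ℕ} (D : Submodule (ZMod 2) (Fin n → ZMod 2)) [Fintype D]
    (v : Fin n → ZMod 2) (hv : v ∉ dualCode D) :
    ∑ c : D, eps (∑ i, v i * (c : Fin n → ZMod 2) i) = 0 := by
  rw [mem_dualCode] at hv
  push_neg at hv
  obtain ⟨c0, hc0, hne⟩ := hv
  have h1 : ∑ i, v i * c0 i = 1 := (zmod2_cases _).resolve_left hne
  set f : D → ℚ := fun c => eps (∑ i, v i * (c : Fin n → ZMod 2) i) with hf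
  have key : ∀ c : D, f ((⟨c0, hc0⟩ : D) + c) = - f c := by
    intro c
    have : ∑ i, v i * ((⟨c0, hc0⟩ : D) + c : D).1 i
        = (∑ i, v i * c0 i) + ∑ i, v i * (c : Fin n → ZMod 2) i := by
      rw [← Finset.sum_add_distrib]
      exact Finset.sum_congr rfl fun i _ => by
        show v i * (c0 i + (c : Fin n → ZMod 2) i) = _
        ring
    simp only [hf]
    rw [this, h1, eps_add, eps_one]
    ring
  have h2 := Equiv.sum_comp (Equiv.addLeft (⟨c0, hc0⟩ : D)) f
  have h3 : ∑ c : D, f ((Equiv.addLeft (⟨c0, hc0⟩ : D)) c) = ∑ c : D, - f c :=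
    Finset.sum_congr rfl fun c _ => key c
  rw [h3, Finset.sum_neg_distrib] at h2
  show univ.sum f = 0
  linarith [h2]

noncomputable def K6 (n w : ℕ) : ℚ :=
  ∑ j ∈ range 7, ((n - w).choose j : ℚ) * ((-1) ^ (6 - j) * (w.choose (6 - j) : ℚ))

lemma sum_eps_wt6 {n : ℕ} (c : Fin n → ZMod 2) :
    ∑ v ∈ univ.filter (fun v : Fin n → ZMod 2 => wt v = 6), eps (∑ i, v i * c i)
      = K6 n (wt c) := by
  have h := congrArg (fun p : ℚ[X] => p.coeff 6) (sum_eps_pol c)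
  simp only [finset_sum_coeff, coeff_C_mul, coeff_X_pow] at h
  rw [coeff6] at h
  rw [Finset.sum_filter, K6, ← h]
  exact Finset.sum_congr rfl fun v _ => by
    by_cases hv : wt v = 6
    · rw [if_pos hv, if_pos hv.symm, mul_one]
    · rw [if_neg hv, if_neg (fun hh => hv hh.symm), mul_zero]

lemma numwt_eq_filter_card {n : ℕ} (D : Submodule (ZMod 2) (Fin n → ZMod 2))
    [DecidablePred (· ∈ D)] (w : ℕ) :
    numwt D w = (univ.filter (fun v : Fin n → ZMod 2 => wt v = w ∧ v ∈ D)).card := by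
  rw [numwt, Nat.card_congr
    (⟨fun x => ⟨x.1.1, x.2, x.1.2⟩, fun x => ⟨⟨x.1, x.2.2⟩, x.2.1⟩,
      fun x => rfl, fun x => rfl⟩ :
      {c : D // wt (c : Fin n → ZMod 2) = w} ≃ {v : Fin n → ZMod 2 // wt v = w ∧ v ∈ D}),
    Nat.card_eq_fintype_card, Fintype.card_subtype]

lemma key {n : ℕ} (D : Submodule (ZMod 2) (Fin n → ZMod 2)) [Fintype D] :
    (Fintype.card D : ℚ) * (numwt (dualCode D) 6 : ℚ)
      = ∑ c : D, K6 n (wt (c : Fin n → ZMod 2)) := by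
  classical
  have hr : ∑ c : D, ∑ v ∈ univ.filter (fun v : Fin n → ZMod 2 => wt v = 6),
      eps (∑ i, v i * (c : Fin n → ZMod 2) i) = ∑ c : D, K6 n (wt (c : Fin n → ZMod 2)) :=
    Finset.sum_congr rfl fun c _ => sum_eps_wt6 _
  rw [← hr, Finset.sum_comm]
  have hv : ∀ v ∈ univ.filter (fun v : Fin n → ZMod 2 => wt v = 6),
      (∑ c : D, eps (∑ i, v i * (c : Fin n → ZMod 2) i))
        = if v ∈ dualCode D then (Fintype.card D : ℚ) else 0 := by
    intro v _
    by_cases h : v ∈ dualCode D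
    · rw [if_pos h, orth_mem D v h]
    · rw [if_neg h, orth_not_mem D v h]
  rw [Finset.sum_congr rfl hv, ← Finset.sum_filter, Finset.filter_filter, Finset.sum_const,
    numwt_eq_filter_card]
  simp [mul_comm]

lemma cast_choose (x j : ℕ) :
    ((x.choose j : ℕ) : ℚ) = (∏ i ∈ range j, ((x : ℚ) - i)) / (Nat.factorial j) := by
  rcases le_or_gt j x with h | h
  · rw [eq_div_iff (by exact_mod_cast (Nat.factorial_ne_zero j))]
    have hd : x.descFactorial j = Nat.factorial j * x.choose j :=
      Nat.descFactorial_eq_factorial_mul_choose x j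
    have hp : ((x.descFactorial j : ℕ) : ℚ) = ∏ i ∈ range j, ((x : ℚ) - i) := by
      rw [Nat.descFactorial_eq_prod_range, Nat.cast_prod]
      refine Finset.prod_congr rfl fun i hi => ?_
      rw [Finset.mem_range] at hi
      rw [Nat.cast_sub (le_of_lt (lt_of_lt_of_le hi h))]
    rw [← hp, hd]
    push_cast
    ring
  · rw [Nat.choose_eq_zero_of_lt h]
    rw [Finset.prod_eq_zero (Finset.mem_range.mpr h) (by rw [sub_self])]
    simp

lemma numwt_card {n : ℕ} (D : Submodule (ZMod 2) (Fin n → ZMod 2)) [Fintype D] (w : ℕ) :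
    numwt D w = (univ.filter (fun c : D => wt (c : Fin n → ZMod 2) = w)).card := by
  rw [numwt, Nat.card_eq_fintype_card, Fintype.card_subtype]

lemma numwt_zero {n : ℕ} (D : Submodule (ZMod 2) (Fin n → ZMod 2)) : numwt D 0 = 1 := by
  rw [numwt]
  have he : ∀ c : D, wt (c : Fin n → ZMod 2) = 0 ↔ c = 0 := fun c => by
    rw [wt_eq_zero_iff]
    exact ⟨fun h => Subtype.ext h, fun h => by rw [h]; rfl⟩
  rw [Nat.card_congr (Equiv.subtypeEquivRight he)]
  exact Nat.card_eq_one_iff_unique.mpr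
    ⟨⟨fun a b => Subtype.ext (a.2.trans b.2.symm)⟩, ⟨⟨0, rfl⟩⟩⟩

lemma group_sum {n : ℕ} (D : Submodule (ZMod 2) (Fin n → ZMod 2)) [Fintype D] (f : ℕ → ℚ) :
    ∑ c : D, f (wt (c : Fin n → ZMod 2)) = ∑ w ∈ range (n + 1), (numwt D w : ℚ) * f w := by
  classical
  rw [← Finset.sum_fiberwise_of_maps_to (g := fun c : D => wt (c : Fin n → ZMod 2))
    (t := range (n + 1)) (fun c _ => Finset.mem_range.mpr (Nat.lt_succ_of_le
      (by simpa using wt_le (c : Fin n → ZMod 2)))) (fun c => f (wt (c : Fin n → ZMod 2)))]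
  refine Finset.sum_congr rfl fun w _ => ?_
  rw [Finset.sum_congr rfl (fun c hc => by rw [(Finset.mem_filter.mp hc).2] :
    ∀ c ∈ univ.filter (fun c : D => wt (c : Fin n → ZMod 2) = w),
      f (wt (c : Fin n → ZMod 2)) = f w),
    Finset.sum_const, numwt_card, nsmul_eq_mul]

lemma card_pow {n : ℕ} (D : Submodule (ZMod 2) (Fin n → ZMod 2)) [Fintype D] :
    Fintype.card D = 2 ^ (Module.finrank (ZMod 2) D) := by
  have := Module.card_eq_pow_finrank (K := ZMod 2) (V := D)
  simpa [ZMod.card] using this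

lemma K6_eq (n w : ℕ) (q p : ℚ) (hq : ((n - w : ℕ) : ℚ) = q) (hp : ((w : ℕ) : ℚ) = p) :
    K6 n w = ∑ j ∈ range 7, ((∏ i ∈ range j, (q - i)) / (Nat.factorial j))
      * ((-1) ^ (6 - j) * ((∏ i ∈ range (6 - j), (p - i)) / (Nat.factorial (6 - j)))) := by
  unfold K6
  refine Finset.sum_congr rfl fun j _ => ?_
  rw [cast_choose, cast_choose, hq, hp]

set_option maxHeartbeats 3000000 in
theorem stmt_14 (m : ℕ) (hm : 4 ≤ m) (hmeven : Even m)
    (C : Submodule (ZMod 2) (Fin (2 ^ m) → ZMod 2))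
    (hdim : Module.finrank (ZMod 2) C = 2 * m + 1)
    (h1 : (numwt C (2 ^ (m - 1) - 2 ^ (m / 2)) : ℚ) = (2 ^ m - 1) * 2 ^ (m - 2) / 3)
    (h2 : (numwt C (2 ^ (m - 1) - 2 ^ ((m - 2) / 2)) : ℚ) =
      (2 ^ m - 1) * 2 ^ (m + 1) / 3)
    (h3 : numwt C (2 ^ (m - 1)) = 2 * (2 ^ m - 1) * (2 ^ (m - 2) + 1))
    (h4 : (numwt C (2 ^ (m - 1) + 2 ^ ((m - 2) / 2)) : ℚ) =
      (2 ^ m - 1) * 2 ^ (m + 1) / 3)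
    (h5 : (numwt C (2 ^ (m - 1) + 2 ^ (m / 2)) : ℚ) = (2 ^ m - 1) * 2 ^ (m - 2) / 3)
    (h6 : numwt C (2 ^ m) = 1)
    (h0 : ∀ w : ℕ, w ≠ 0 → w ≠ 2 ^ (m - 1) - 2 ^ (m / 2) →
      w ≠ 2 ^ (m - 1) - 2 ^ ((m - 2) / 2) → w ≠ 2 ^ (m - 1) →
      w ≠ 2 ^ (m - 1) + 2 ^ ((m - 2) / 2) → w ≠ 2 ^ (m - 1) + 2 ^ (m / 2) →
      w ≠ 2 ^ m → numwt C w = 0) :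
    (numwt (dualCode C) 6 : ℚ) =
      (1 / 45) * 2 ^ (m - 4) * (2 ^ m - 4) ^ 2 * (2 ^ m - 1) := by
  obtain ⟨k, hk⟩ := hmeven
  have hk2 : 2 ≤ k := by omega
  have ha2 : 2 ≤ 2 ^ (k - 1) := by
    calc (2:ℕ) = 2 ^ 1 := rfl
    _ ≤ 2 ^ (k - 1) := Nat.pow_le_pow_right (by norm_num) (by omega)
  set a : ℕ := 2 ^ (k - 1) with hadef
  have hm1 : 2 ^ (m - 1) = 2 * (a * a) := by
    have h : m - 1 = (k - 1) + ((k - 1) + 1) := by omega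
    rw [hadef, h, pow_add, pow_add, pow_one]
    ring
  have hm0 : 2 ^ m = 4 * (a * a) := by
    have h : m = (k - 1) + ((k - 1) + 2) := by omega
    rw [hadef, h, pow_add, pow_add]
    ring
  have hhalf : 2 ^ (m / 2) = 2 * a := by
    have h : m / 2 = (k - 1) + 1 := by omega
    rw [hadef, h, pow_add, pow_one]
    ring
  have hhalf2 : 2 ^ ((m - 2) / 2) = a := by
    have h : (m - 2) / 2 = k - 1 := by omega
    rw [hadef, h]
  rw [hm1, hhalf] at h1 h5
  rw [hm1, hhalf2] at h2 h4
  rw [hm1] at h3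
  set A : ℕ := a * a with hAdef
  have haA : 2 * a ≤ A := by
    rw [hAdef]
    exact Nat.mul_le_mul ha2 (le_refl a)
  -- rational power facts
  have hα : ((a : ℕ) : ℚ) = (2 : ℚ) ^ (k - 1) := by rw [hadef]; push_cast; ring
  have hcA : ((A : ℕ) : ℚ) = ((a : ℕ) : ℚ) ^ 2 := by rw [hAdef]; push_cast; ring
  have hqm : (2 : ℚ) ^ m = 4 * ((a : ℕ) : ℚ) ^ 2 := by
    have h : m = (k - 1) + ((k - 1) + 2) := by omega
    rw [h, pow_add, pow_add, hα]
    ring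
  have hqm2 : (2 : ℚ) ^ (m - 2) = ((a : ℕ) : ℚ) ^ 2 := by
    have h' : (2 : ℚ) ^ (m - 2) * 4 = 4 * ((a : ℕ) : ℚ) ^ 2 := by
      rw [show (4:ℚ) = 2 ^ 2 by norm_num, ← pow_add, show m - 2 + 2 = m by omega, hqm]
      ring
    linarith
  have hqm1 : (2 : ℚ) ^ (m + 1) = 8 * ((a : ℕ) : ℚ) ^ 2 := by
    rw [pow_add, hqm]; ring
  have hqm4 : (2 : ℚ) ^ (m - 4) = ((a : ℕ) : ℚ) ^ 2 / 4 := by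
    have h' : (2 : ℚ) ^ (m - 4) * 16 = 4 * ((a : ℕ) : ℚ) ^ 2 := by
      rw [show (16:ℚ) = 2 ^ 4 by norm_num, ← pow_add, show m - 4 + 4 = m by omega, hqm]
    linarith
  haveI : Fintype C := Fintype.ofFinite C
  have hcard : ((Fintype.card C : ℕ) : ℚ) = 32 * ((a : ℕ) : ℚ) ^ 4 := by
    rw [card_pow, hdim]
    push_cast
    have h : 2 * m + 1 = ((k - 1) + (k - 1)) + ((k - 1) + (k - 1)) + 5 := by omega
    rw [h, pow_add, pow_add, pow_add, hα]
    ring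
  have hkey := key C
  rw [group_sum] at hkey
  -- restrict the sum to the 7 weights
  have hsub : ({0, 2*A - 2*a, 2*A - a, 2*A, 2*A + a, 2*A + 2*a, 2^m} : Finset ℕ)
      ⊆ range (2 ^ m + 1) := by
    intro x hx
    simp only [Finset.mem_insert, Finset.mem_singleton] at hx
    rw [Finset.mem_range]
    omega
  have hzero : ∀ x ∈ range (2 ^ m + 1),
      x ∉ ({0, 2*A - 2*a, 2*A - a, 2*A, 2*A + a, 2*A + 2*a, 2^m} : Finset ℕ) →
      (numwt C x : ℚ) * K6 (2 ^ m) x = 0 := by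
    intro x _ hnx
    simp only [Finset.mem_insert, Finset.mem_singleton] at hnx
    push_neg at hnx
    obtain ⟨e0, e1, e2, e3, e4, e5, e6⟩ := hnx
    rw [h0 x e0 (by rw [hm1, hhalf]; exact e1) (by rw [hm1, hhalf2]; exact e2)
      (by rw [hm1]; exact e3) (by rw [hm1, hhalf2]; exact e4)
      (by rw [hm1, hhalf]; exact e5) e6]
    simp
  rw [← Finset.sum_subset hsub hzero] at hkey
  rw [Finset.sum_insert (by simp only [Finset.mem_insert, Finset.mem_singleton]; omega),
    Finset.sum_insert (by simp only [Finset.mem_insert, Finset.mem_singleton]; omega),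
    Finset.sum_insert (by simp only [Finset.mem_insert, Finset.mem_singleton]; omega),
    Finset.sum_insert (by simp only [Finset.mem_insert, Finset.mem_singleton]; omega),
    Finset.sum_insert (by simp only [Finset.mem_insert, Finset.mem_singleton]; omega),
    Finset.sum_insert (by simp only [Finset.mem_singleton]; omega),
    Finset.sum_singleton] at hkey
  -- K6 evaluations
  have e0 : K6 (2 ^ m) 0 = ∑ j ∈ range 7,
      ((∏ i ∈ range j, (4 * ((a : ℕ) : ℚ) ^ 2 - i)) / (Nat.factorial j))
      * ((-1) ^ (6 - j) * ((∏ i ∈ range (6 - j), ((0 : ℚ) - i)) / (Nat.factorial (6 - j)))) :=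
    K6_eq _ _ _ _ (by rw [Nat.sub_zero]; push_cast [hm0, hcA]; ring) (by norm_num)
  have hq1 : ((2 ^ m - (2*A - 2*a) : ℕ) : ℚ) = 2*((a:ℕ):ℚ)^2 + 2*((a:ℕ):ℚ) := by
    rw [show 2 ^ m - (2*A - 2*a) = 2*A + 2*a by omega]
    push_cast [hcA]; ring
  have hp1 : (((2*A - 2*a : ℕ)) : ℚ) = 2*((a:ℕ):ℚ)^2 - 2*((a:ℕ):ℚ) := by
    rw [Nat.cast_sub (by omega)]; push_cast [hcA]; ring
  have hq2 : ((2 ^ m - (2*A - a) : ℕ) : ℚ) = 2*((a:ℕ):ℚ)^2 + ((a:ℕ):ℚ) := by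
    rw [show 2 ^ m - (2*A - a) = 2*A + a by omega]
    push_cast [hcA]; ring
  have hp2 : (((2*A - a : ℕ)) : ℚ) = 2*((a:ℕ):ℚ)^2 - ((a:ℕ):ℚ) := by
    rw [Nat.cast_sub (by omega)]; push_cast [hcA]; ring
  have hq3 : ((2 ^ m - 2*A : ℕ) : ℚ) = 2*((a:ℕ):ℚ)^2 := by
    rw [show 2 ^ m - 2*A = 2*A by omega]
    push_cast [hcA]; ring
  have hp3 : (((2*A : ℕ)) : ℚ) = 2*((a:ℕ):ℚ)^2 := by push_cast [hcA]; ring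
  have hq4 : ((2 ^ m - (2*A + a) : ℕ) : ℚ) = 2*((a:ℕ):ℚ)^2 - ((a:ℕ):ℚ) := by
    rw [show 2 ^ m - (2*A + a) = 2*A - a by omega, Nat.cast_sub (by omega)]
    push_cast [hcA]; ring
  have hp4 : (((2*A + a : ℕ)) : ℚ) = 2*((a:ℕ):ℚ)^2 + ((a:ℕ):ℚ) := by push_cast [hcA]; ring
  have hq5 : ((2 ^ m - (2*A + 2*a) : ℕ) : ℚ) = 2*((a:ℕ):ℚ)^2 - 2*((a:ℕ):ℚ) := by
    rw [show 2 ^ m - (2*A + 2*a) = 2*A - 2*a by omega, Nat.cast_sub (by omega)]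
    push_cast [hcA]; ring
  have hp5 : (((2*A + 2*a : ℕ)) : ℚ) = 2*((a:ℕ):ℚ)^2 + 2*((a:ℕ):ℚ) := by
    push_cast [hcA]; ring
  have hq6 : ((2 ^ m - 2 ^ m : ℕ) : ℚ) = 0 := by rw [Nat.sub_self]; norm_num
  have hp6 : (((2 ^ m : ℕ)) : ℚ) = 4*((a:ℕ):ℚ)^2 := by push_cast [hm0, hcA]; ring
  have e1 := K6_eq (2 ^ m) (2*A - 2*a) _ _ hq1 hp1
  have e2 := K6_eq (2 ^ m) (2*A - a) _ _ hq2 hp2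
  have e3 := K6_eq (2 ^ m) (2*A) _ _ hq3 hp3
  have e4 := K6_eq (2 ^ m) (2*A + a) _ _ hq4 hp4
  have e5 := K6_eq (2 ^ m) (2*A + 2*a) _ _ hq5 hp5
  have e6 := K6_eq (2 ^ m) (2 ^ m) _ _ hq6 hp6
  have hc3 : ((numwt C (2*A) : ℕ) : ℚ) = 2 * (4*((a:ℕ):ℚ)^2 - 1) * (((a:ℕ):ℚ)^2 + 1) := by
    rw [h3, Nat.cast_mul, Nat.cast_mul, Nat.cast_sub Nat.one_le_two_pow, Nat.cast_add]
    push_cast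
    rw [hqm, hqm2]
  have hc6 : ((numwt C (2 ^ m) : ℕ) : ℚ) = 1 := by rw [h6]; norm_num
  have hc0 : ((numwt C 0 : ℕ) : ℚ) = 1 := by rw [numwt_zero]; norm_num
  rw [hqm, hqm2] at h1 h5
  rw [hqm, hqm1] at h2 h4
  rw [hcard, hc0, hc3, hc6, h1, h2, h4, h5, e0, e1, e2, e3, e4, e5, e6] at hkey
  rw [hqm4, hqm]
  refine mul_left_cancel₀ (a := 32*((a:ℕ):ℚ)^4) (by positivity) ?_
  rw [hkey]
  simp only [Finset.sum_range_succ, Finset.sum_range_zero, Finset.prod_range_succ,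
    Finset.prod_range_zero, Nat.factorial]
  push_cast
  norm_num
  ring
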